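/- Let L ≥ 2 be an integer, N = 2^L, ℓ ∈ {1,…,L−1}, and let X_{ℓ+1}, …, X_L ∈ ℂ^{N×N} satisfy supp(X_p) ⊆ supp(S_p) for every p ∈ {ℓ+1,…,L}, where S_p := I_{2^{p−1}} ⊗ J_2 ⊗ I_{N/2^p}. Then supp(X_{ℓ+1} X_{ℓ+2} ⋯ X_L) ⊆ supp(I_{2^ℓ} ⊗ J_{N/2^ℓ}). -/

import Mathlib

open Matrix Kronecker

/-- The `n × n` all-ones matrix `J_n`. -/
def Jmat (n : ℕ) : Matrix (Fin n) (Fin n) ℂ := Matrix.of fun _ _ => 1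

lemma two_pow_div (L ℓ : ℕ) (h : ℓ ≤ L) : 2 ^ L / 2 ^ ℓ = 2 ^ (L - ℓ) :=
  Nat.pow_div h (by norm_num)

lemma two_pow_mul_div (L ℓ : ℕ) (h : ℓ ≤ L) : 2 ^ ℓ * (2 ^ L / 2 ^ ℓ) = 2 ^ L :=
  Nat.mul_div_cancel' (pow_dvd_pow 2 h)

lemma bfly_dim (L ℓ : ℕ) (h1 : 1 ≤ ℓ) (h2 : ℓ ≤ L) :
    2 ^ (ℓ - 1) * (2 * (2 ^ L / 2 ^ ℓ)) = 2 ^ L := by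
  rw [two_pow_div L ℓ h2, show (2 : ℕ) * 2 ^ (L - ℓ) = 2 ^ (L - ℓ + 1) by rw [pow_succ]; ring,
    ← pow_add]
  congr 1
  omega

/-- Reindexing equivalence `Fin 2^(ℓ-1) × (Fin 2 × Fin (2^L/2^ℓ)) ≃ Fin 2^L`,
sending `(a, (b, c))` to the lexicographic index `a·(2·2^L/2^ℓ) + b·(2^L/2^ℓ) + c`. -/
def bflyEquiv (L ℓ : ℕ) (h1 : 1 ≤ ℓ) (h2 : ℓ ≤ L) :
    Fin (2 ^ (ℓ - 1)) × (Fin 2 × Fin (2 ^ L / 2 ^ ℓ)) ≃ Fin (2 ^ L) :=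
  ((Equiv.refl _).prodCongr finProdFinEquiv).trans
    (finProdFinEquiv.trans (finCongr (bfly_dim L ℓ h1 h2)))

/-- The butterfly support `S_ℓ = I_{2^{ℓ-1}} ⊗ J_2 ⊗ I_{N/2^ℓ}`, as an `N × N` matrix,
`N = 2^L`. -/
def bflySupp (L ℓ : ℕ) (h1 : 1 ≤ ℓ) (h2 : ℓ ≤ L) : Matrix (Fin (2 ^ L)) (Fin (2 ^ L)) ℂ :=
  Matrix.reindex (bflyEquiv L ℓ h1 h2) (bflyEquiv L ℓ h1 h2)
    ((1 : Matrix (Fin (2 ^ (ℓ - 1))) (Fin (2 ^ (ℓ - 1))) ℂ) ⊗ₖ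
      (Jmat 2 ⊗ₖ (1 : Matrix (Fin (2 ^ L / 2 ^ ℓ)) (Fin (2 ^ L / 2 ^ ℓ)) ℂ)))

/-- Reindexing equivalence `Fin 2^ℓ × Fin (2^L/2^ℓ) ≃ Fin 2^L` (lexicographic). -/
def blockEquiv (L ℓ : ℕ) (h : ℓ ≤ L) : Fin (2 ^ ℓ) × Fin (2 ^ L / 2 ^ ℓ) ≃ Fin (2 ^ L) :=
  finProdFinEquiv.trans (finCongr (two_pow_mul_div L ℓ h))

/-- The matrix `J_{2^ℓ} ⊗ I_{N/2^ℓ}`, as an `N × N` matrix, `N = 2^L`. -/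
def JkronI (L ℓ : ℕ) (h : ℓ ≤ L) : Matrix (Fin (2 ^ L)) (Fin (2 ^ L)) ℂ :=
  Matrix.reindex (blockEquiv L ℓ h) (blockEquiv L ℓ h)
    (Jmat (2 ^ ℓ) ⊗ₖ (1 : Matrix (Fin (2 ^ L / 2 ^ ℓ)) (Fin (2 ^ L / 2 ^ ℓ)) ℂ))

/-- The matrix `I_{2^ℓ} ⊗ J_{N/2^ℓ}`, as an `N × N` matrix, `N = 2^L`. -/
def IkronJ (L ℓ : ℕ) (h : ℓ ≤ L) : Matrix (Fin (2 ^ L)) (Fin (2 ^ L)) ℂ :=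
  Matrix.reindex (blockEquiv L ℓ h) (blockEquiv L ℓ h)
    ((1 : Matrix (Fin (2 ^ ℓ)) (Fin (2 ^ ℓ)) ℂ) ⊗ₖ Jmat (2 ^ L / 2 ^ ℓ))

/-- The `k`-th element of the canonical row index set `R^(ℓ)_i` (0-based):
`i + k·(N/2^ℓ)`, for `i ∈ Fin (N/2^ℓ)`, `k ∈ Fin 2^ℓ`, `N = 2^L`. -/
def rowIdx (L ℓ : ℕ) (h : ℓ ≤ L) (i : Fin (2 ^ L / 2 ^ ℓ)) (k : Fin (2 ^ ℓ)) : Fin (2 ^ L) :=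
  ⟨(i : ℕ) + (k : ℕ) * (2 ^ L / 2 ^ ℓ), by
    have hi := i.isLt
    have hk := k.isLt
    calc (i : ℕ) + (k : ℕ) * (2 ^ L / 2 ^ ℓ)
        < 2 ^ L / 2 ^ ℓ + (k : ℕ) * (2 ^ L / 2 ^ ℓ) := by omega
      _ = ((k : ℕ) + 1) * (2 ^ L / 2 ^ ℓ) := by ring
      _ ≤ 2 ^ ℓ * (2 ^ L / 2 ^ ℓ) := Nat.mul_le_mul_right _ (by omega)
      _ = 2 ^ L := two_pow_mul_div L ℓ h⟩

/-- The `k`-th element of the canonical column index set `C^(ℓ)_j` (0-based):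
`j·(N/2^ℓ) + k`, for `j ∈ Fin 2^ℓ`, `k ∈ Fin (N/2^ℓ)`, `N = 2^L`. -/
def colIdx (L ℓ : ℕ) (h : ℓ ≤ L) (j : Fin (2 ^ ℓ)) (k : Fin (2 ^ L / 2 ^ ℓ)) : Fin (2 ^ L) :=
  ⟨(j : ℕ) * (2 ^ L / 2 ^ ℓ) + (k : ℕ), by
    have hj := j.isLt
    have hk := k.isLt
    calc (j : ℕ) * (2 ^ L / 2 ^ ℓ) + (k : ℕ)
        < (j : ℕ) * (2 ^ L / 2 ^ ℓ) + (2 ^ L / 2 ^ ℓ) := by omega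
      _ = ((j : ℕ) + 1) * (2 ^ L / 2 ^ ℓ) := by ring
      _ ≤ 2 ^ ℓ * (2 ^ L / 2 ^ ℓ) := Nat.mul_le_mul_right _ (by omega)
      _ = 2 ^ L := two_pow_mul_div L ℓ h⟩

/-- The squared Frobenius norm `‖A‖_F²` of a complex matrix. -/
noncomputable def frobSq {m n : Type*} [Fintype m] [Fintype n] (A : Matrix m n ℂ) : ℝ :=
  ∑ i, ∑ j, ‖A i j‖ ^ 2


lemma prod_quot {n d : ℕ} (Ms : List (Matrix (Fin n) (Fin n) ℂ))
    (h : ∀ M ∈ Ms, ∀ a b : Fin n, M a b ≠ 0 → (a:ℕ)/d = (b:ℕ)/d) :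
    ∀ a b : Fin n, Ms.prod a b ≠ 0 → (a:ℕ)/d = (b:ℕ)/d := by
  induction Ms with
  | nil =>
    intro a b hab
    simp only [List.prod_nil] at hab
    by_contra hne
    exact hab (Matrix.one_apply_ne (fun he => hne (by rw [he])))
  | cons M Ms ih =>
    intro a b hab
    rw [List.prod_cons, Matrix.mul_apply] at hab
    obtain ⟨c, hc⟩ := Finset.exists_ne_zero_of_sum_ne_zero hab
    have h1 : M a c ≠ 0 := fun h0 => hc.2 (by rw [h0, zero_mul])
    have h2 : Ms.prod c b ≠ 0 := fun h0 => hc.2 (by rw [h0, mul_zero])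
    rw [h M List.mem_cons_self a c h1,
      ih (fun M' hM' => h M' (List.mem_cons_of_mem _ hM')) c b h2]

lemma ikronJ_ne (L ℓ : ℕ) (h : ℓ ≤ L) (a b : Fin (2 ^ L))
    (hab : (a : ℕ) / 2 ^ (L - ℓ) = (b : ℕ) / 2 ^ (L - ℓ)) :
    IkronJ L ℓ h a b ≠ 0 := by
  rw [← two_pow_div L ℓ h] at hab
  simp only [IkronJ, Matrix.reindex_apply, Matrix.submatrix_apply, blockEquiv,
    Equiv.symm_trans_apply, finCongr_symm, finCongr_apply, finProdFinEquiv_symm_apply,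
    Matrix.kroneckerMap_apply, Jmat, Matrix.of_apply, mul_one, Matrix.one_apply,
    Fin.divNat]
  rw [if_pos]
  · norm_num
  · exact Fin.ext hab

lemma bfly_quot (L p : ℕ) (h1 : 1 ≤ p) (h2 : p ≤ L) (a b : Fin (2 ^ L))
    (h : bflySupp L p h1 h2 a b ≠ 0) :
    (a : ℕ) / (2 * (2 ^ L / 2 ^ p)) = (b : ℕ) / (2 * (2 ^ L / 2 ^ p)) := by
  simp only [bflySupp, Matrix.reindex_apply, Matrix.submatrix_apply,
    Matrix.kroneckerMap_apply] at h
  have h1' := (mul_ne_zero_iff.mp h).1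
  have he : ((bflyEquiv L p h1 h2).symm a).1 = ((bflyEquiv L p h1 h2).symm b).1 := by
    by_contra hne
    exact h1' (Matrix.one_apply_ne hne)
  have := congrArg Fin.val he
  simpa only [bflyEquiv, Equiv.symm_trans_apply, finCongr_symm, finCongr_apply,
    finProdFinEquiv_symm_apply, Equiv.prodCongr_symm, Equiv.prodCongr_apply, Equiv.refl_symm,
    Prod.map, Equiv.refl_apply, Fin.divNat, Fin.coe_cast] using this

/-- For `L ≥ 2`, `N = 2^L`, `ℓ ∈ {1,…,L-1}`: if `X_{ℓ+1}, …, X_L ∈ ℂ^{N×N}`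
satisfy `supp(X_p) ⊆ supp(S_p)` for every `p ∈ {ℓ+1,…,L}`, then
`supp(X_{ℓ+1} X_{ℓ+2} ⋯ X_L) ⊆ supp(I_{2^ℓ} ⊗ J_{N/2^ℓ})`. -/
theorem supp_prod_right_subset (L : ℕ) (hL : 2 ≤ L) (ℓ : ℕ) (hℓ1 : 1 ≤ ℓ) (hℓ2 : ℓ ≤ L - 1)
    (X : Fin (L - ℓ) → Matrix (Fin (2 ^ L)) (Fin (2 ^ L)) ℂ)
    (hX : ∀ p : Fin (L - ℓ), ∀ a b, X p a b ≠ 0 →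
      bflySupp L (ℓ + 1 + (p : ℕ)) (by omega) (by have := p.isLt; omega) a b ≠ 0) :
    ∀ a b, (List.ofFn X).prod a b ≠ 0 → IkronJ L ℓ (by omega) a b ≠ 0 := by
  intro a b hab
  apply ikronJ_ne
  apply prod_quot (List.ofFn X) ?_ a b hab
  intro M hM a' b' hM'
  rw [List.mem_ofFn] at hM
  obtain ⟨p, rfl⟩ := hM
  have hp := p.isLt
  have hq := bfly_quot L (ℓ + 1 + (p : ℕ)) (by omega) (by omega) a' b' (hX p a' b' hM')
  rw [two_pow_div L _ (by omega)] at hq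
  have hd : 2 ^ (L - ℓ) = 2 * 2 ^ (L - (ℓ + 1 + (p : ℕ))) * 2 ^ (p : ℕ) := by
    rw [show (2:ℕ) * 2 ^ (L - (ℓ + 1 + (p:ℕ))) = 2 ^ (L - (ℓ + 1 + (p:ℕ)) + 1) by
      rw [pow_succ]; ring, ← pow_add]
    congr 1
    omega
  rw [hd, ← Nat.div_div_eq_div_mul (a' : ℕ) (2 * 2 ^ (L - (ℓ + 1 + (p : ℕ)))) (2 ^ (p : ℕ)),
    ← Nat.div_div_eq_div_mul (b' : ℕ) (2 * 2 ^ (L - (ℓ + 1 + (p : ℕ)))) (2 ^ (p : ℕ)), hq]
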